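/- Under the weighted trace-penalty assumptions, every global minimizer X* of f has full column rank p; equivalently, no global minimizer has a zero column. -/

import Mathlib

open Matrix
set_option linter.unusedSectionVars false
set_option maxHeartbeats 1000000

variable {m k l : Type*} [Fintype m] [Fintype k] [Fintype l]

lemma aux_mul_vecMulVec (M : Matrix m k ℝ) (u : k → ℝ) (v : l → ℝ) :
    M * vecMulVec u v = vecMulVec (M *ᵥ u) v := by
  ext i j
  simp only [Matrix.mul_apply, vecMulVec_apply, mulVec, dotProduct]
  rw [Finset.sum_mul]
  exact Finset.sum_congr rfl fun t _ => by ring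

lemma aux_vecMulVec_mul_vecMulVec (a : m → ℝ) (b c : k → ℝ) (d : l → ℝ) :
    vecMulVec a b * vecMulVec c d = (b ⬝ᵥ c) • vecMulVec a d := by
  ext i j
  simp only [Matrix.mul_apply, vecMulVec_apply, Matrix.smul_apply, smul_eq_mul, dotProduct]
  rw [Finset.sum_mul]
  exact Finset.sum_congr rfl fun t _ => by ring

lemma aux_trace_vecMulVec (u v : m → ℝ) : (vecMulVec u v).trace = u ⬝ᵥ v := by
  simp [Matrix.trace, Matrix.diag, vecMulVec_apply, dotProduct]

lemma aux_transpose_vecMulVec (u : m → ℝ) (v : k → ℝ) :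
    (vecMulVec u v)ᵀ = vecMulVec v u := by
  ext i j; simp [vecMulVec_apply, mul_comm]

lemma aux_dot_self_pos (x : m → ℝ) (hx : x ≠ 0) : 0 < x ⬝ᵥ x := by
  rcases Function.ne_iff.mp hx with ⟨i, hi⟩
  have h0 : x i ≠ 0 := by simpa using hi
  simp only [dotProduct]
  exact Finset.sum_pos' (fun j _ => mul_self_nonneg _)
    ⟨i, Finset.mem_univ i, mul_self_pos.mpr h0⟩

lemma aux_exists_u {n p : ℕ} (hpn : p < n)
    (V : Matrix (Fin n) (Fin n) ℝ) (hV : Vᵀ * V = 1)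
    (X : Matrix (Fin n) (Fin p) ℝ) (v : Fin p → ℝ) (hv : v ≠ 0) (hXv : X *ᵥ v = 0) :
    ∃ (u : Fin n → ℝ) (d : Fin n → ℝ), u ≠ 0 ∧ Xᵀ *ᵥ u = 0 ∧ u = V *ᵥ d ∧
      ∀ j : Fin n, p ≤ (j : ℕ) → d j = 0 := by
  classical
  set P : Matrix (Fin n) (Fin p) ℝ :=
    Matrix.of fun (j : Fin n) (i : Fin p) => if j = Fin.castLE hpn.le i then (1:ℝ) else 0 with hP
  have hPt : Pᵀ * P = 1 := by
    ext i i'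
    simp only [Matrix.mul_apply, Matrix.transpose_apply, hP, Matrix.of_apply, Matrix.one_apply]
    rw [Finset.sum_eq_single (Fin.castLE hpn.le i)]
    · simp [Fin.castLE_inj, eq_comm]
    · intro j _ hj; simp [hj]
    · simp
  have hVP : (V * P)ᵀ * (V * P) = 1 := by
    rw [Matrix.transpose_mul, Matrix.mul_assoc, ← Matrix.mul_assoc Vᵀ V P, hV, Matrix.one_mul, hPt]
  set L := (V * P).mulVecLin with hL
  have hcancel : ∀ c : Fin p → ℝ, (V * P)ᵀ *ᵥ ((V * P) *ᵥ c) = c := by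
    intro c
    rw [Matrix.mulVec_mulVec, hVP, Matrix.one_mulVec]
  have hLinj : Function.Injective L := by
    intro c c' h
    have h2 : (V * P)ᵀ *ᵥ (L c) = (V * P)ᵀ *ᵥ (L c') := by rw [h]
    rwa [hL, Matrix.mulVecLin_apply, Matrix.mulVecLin_apply, hcancel, hcancel] at h2
  have hSrank : Module.finrank ℝ (LinearMap.range L) = p := by
    have h := LinearMap.finrank_range_add_finrank_ker L
    rw [LinearMap.ker_eq_bot.mpr hLinj, finrank_bot, add_zero] at h
    simpa using h
  -- rank of X
  have hkerX : Module.finrank ℝ (LinearMap.ker X.mulVecLin) ≠ 0 := by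
    have hpos : 0 < Module.finrank ℝ (LinearMap.ker X.mulVecLin) := by
      rw [Module.finrank_pos_iff_exists_ne_zero]
      refine ⟨⟨v, by simp [LinearMap.mem_ker, Matrix.mulVecLin_apply, hXv]⟩, ?_⟩
      simpa [Submodule.mk_eq_zero] using hv
    omega
  have hrn : X.rank + Module.finrank ℝ (LinearMap.ker X.mulVecLin) = p := by
    have h := LinearMap.finrank_range_add_finrank_ker X.mulVecLin
    simpa [Matrix.rank] using h
  have hXrank : X.rank + 1 ≤ p := by omega
  set K := LinearMap.ker (Xᵀ).mulVecLin with hK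
  have hKrank : Xᵀ.rank + Module.finrank ℝ K = n := by
    have h := LinearMap.finrank_range_add_finrank_ker (Xᵀ).mulVecLin
    simpa [Matrix.rank] using h
  have hXt : Xᵀ.rank = X.rank := Matrix.rank_transpose X
  have hinf : Module.finrank ℝ (K ⊓ LinearMap.range L : Submodule ℝ (Fin n → ℝ)) ≠ 0 := by
    have hsum := Submodule.finrank_sup_add_finrank_inf_eq K (LinearMap.range L)
    have hle : Module.finrank ℝ (K ⊔ LinearMap.range L : Submodule ℝ (Fin n → ℝ)) ≤ n := by
      have := Submodule.finrank_le (K ⊔ LinearMap.range L : Submodule ℝ (Fin n → ℝ))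
      simpa using this
    omega
  have hbot : (K ⊓ LinearMap.range L : Submodule ℝ (Fin n → ℝ)) ≠ ⊥ := by
    intro h; exact hinf (by rw [h]; simp)
  obtain ⟨u, hu_mem, hu_ne⟩ := Submodule.ne_bot_iff _ |>.mp hbot
  obtain ⟨huK, huS⟩ := Submodule.mem_inf.mp hu_mem
  obtain ⟨c, hc⟩ := huS
  refine ⟨u, P *ᵥ c, hu_ne, by simpa [hK, LinearMap.mem_ker, Matrix.mulVecLin_apply, Matrix.mulVec_transpose] using huK, ?_, ?_⟩
  · rw [← hc]; simp [hL, Matrix.mulVecLin_apply, Matrix.mulVec_mulVec]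
  · intro j hj
    simp only [Matrix.mulVec, dotProduct, hP, Matrix.of_apply]
    apply Finset.sum_eq_zero
    intro i _
    have : j ≠ Fin.castLE hpn.le i := by
      intro h; rw [h] at hj; simp at hj; omega
    simp [this]

lemma aux_key {n p : ℕ} (hpn : p < n)
    (A : Matrix (Fin n) (Fin n) ℝ) (hA : A.IsSymm)
    (V : Matrix (Fin n) (Fin n) ℝ) (hV : Vᵀ * V = 1)
    (lam : Fin n → ℝ) (hAV : A = V * Matrix.diagonal lam * Vᵀ)
    (hmono : Monotone lam)
    (μ : ℝ) (hμ : 0 < μ)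
    (w : Fin p → ℝ) (hwanti : StrictAnti w)
    (hwlam : ∀ i : Fin p, lam (Fin.castLE hpn.le i) / μ < w i)
    (X : Matrix (Fin n) (Fin p) ℝ)
    (hmin : ∀ Y : Matrix (Fin n) (Fin p) ℝ,
      (1 / 2) * (Xᵀ * A * X).trace +
        (μ / 4) * ((Xᵀ * X - Matrix.diagonal w)ᵀ * (Xᵀ * X - Matrix.diagonal w)).trace
      ≤ (1 / 2) * (Yᵀ * A * Y).trace +
        (μ / 4) * ((Yᵀ * Y - Matrix.diagonal w)ᵀ * (Yᵀ * Y - Matrix.diagonal w)).trace)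
    (v : Fin p → ℝ) (hv : v ≠ 0) (hXv : X *ᵥ v = 0) : False := by
  classical
  obtain ⟨u, d, hu_ne, hXu, hud, hd0⟩ := aux_exists_u hpn V hV X v hv hXv
  obtain ⟨i0, hi0⟩ := Function.ne_iff.mp hv
  have hp0 : 0 < p := i0.pos
  set iL : Fin p := ⟨p - 1, by omega⟩ with hiL
  set Wd := Matrix.diagonal w with hWd
  clear_value iL Wd
  set b := v ⬝ᵥ v with hbdef
  have hb : 0 < b := aux_dot_self_pos v hv
  set a := u ⬝ᵥ u with hadef
  have ha : 0 < a := aux_dot_self_pos u hu_ne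
  clear_value a b
  have hVdot : ∀ x y : Fin n → ℝ, (V *ᵥ x) ⬝ᵥ (V *ᵥ y) = x ⬝ᵥ y := by
    intro x y
    rw [Matrix.dotProduct_mulVec, ← Matrix.mulVec_transpose, Matrix.mulVec_mulVec, hV,
      Matrix.one_mulVec]
  have had : a = d ⬝ᵥ d := by rw [hadef, hud, hVdot]
  set q := u ⬝ᵥ (A *ᵥ u) with hq
  have hqd : q = d ⬝ᵥ (Matrix.diagonal lam *ᵥ d) := by
    rw [hq, hud, hAV, Matrix.mulVec_mulVec, Matrix.mul_assoc (V * Matrix.diagonal lam) Vᵀ V, hV,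
      Matrix.mul_one, ← Matrix.mulVec_mulVec, hVdot]
  clear_value q
  set lamL := lam (Fin.castLE hpn.le iL) with hlamL
  set wL := w iL with hwLdef
  have hgap : lamL < μ * wL := by
    have h := hwlam iL
    rw [div_lt_iff₀ hμ] at h
    linarith
  set g := μ * wL - lamL with hgdef
  have hg : 0 < g := by rw [hgdef]; linarith
  clear_value lamL wL g
  have hq_le : q ≤ lamL * a := by
    rw [hqd, had]
    simp only [dotProduct, Matrix.mulVec_diagonal]
    rw [Finset.mul_sum]
    apply Finset.sum_le_sum
    intro j _
    by_cases hdj : d j = 0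
    · simp [hdj]
    · have hjp : (j : ℕ) < p := by
        by_contra hc; exact hdj (hd0 j (by omega))
      have hle : lam j ≤ lamL := by
        rw [hlamL]
        apply hmono
        rw [Fin.le_def]
        simp only [Fin.coe_castLE, hiL]
        omega
      nlinarith [mul_self_nonneg (d j)]
  set r := v ⬝ᵥ (Wd *ᵥ v) with hrdef
  clear_value r
  have hr_ge : wL * b ≤ r := by
    rw [hrdef, hbdef, hWd]
    simp only [dotProduct, Matrix.mulVec_diagonal]
    rw [Finset.mul_sum]
    apply Finset.sum_le_sum
    intro i _
    have hle : wL ≤ w i := by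
      rw [hwLdef]
      apply hwanti.antitone
      rw [Fin.le_def]
      simp only [hiL]
      omega
    nlinarith [mul_self_nonneg (v i)]
  -- the perturbation
  set t := Real.sqrt (g / (μ * a * b)) with htdef
  have hfrac : 0 < g / (μ * a * b) := div_pos hg (by positivity)
  have ht2 : t ^ 2 = g / (μ * a * b) := Real.sq_sqrt hfrac.le
  have hT0 : 0 < t ^ 2 := by rw [ht2]; exact hfrac
  clear_value t
  set B := vecMulVec u v with hB
  set N := vecMulVec v v with hN
  clear_value B N
  have hBt : Bᵀ = vecMulVec v u := by rw [hB, aux_transpose_vecMulVec]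
  have hXB : Xᵀ * B = 0 := by
    rw [hB, aux_mul_vecMulVec, hXu]
    ext i j; simp [vecMulVec_apply]
  have hBX : Bᵀ * X = 0 := by
    have h := congrArg Matrix.transpose hXB
    rwa [Matrix.transpose_mul, Matrix.transpose_transpose, Matrix.transpose_zero] at h
  have hBB : Bᵀ * B = a • N := by
    rw [hBt, hB, aux_vecMulVec_mul_vecMulVec, ← hadef, ← hN]
  have htr1 : (Xᵀ * (A * B)).trace = 0 := by
    rw [hB, aux_mul_vecMulVec A, aux_mul_vecMulVec Xᵀ, aux_trace_vecMulVec,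
      Matrix.mulVec_transpose, ← Matrix.dotProduct_mulVec, hXv, dotProduct_zero]
  have htr2 : (Bᵀ * (A * X)).trace = 0 := by
    rw [Matrix.trace_mul_comm, hBt, Matrix.mul_assoc, aux_mul_vecMulVec X v u, hXv]
    have h0 : vecMulVec (0 : Fin n → ℝ) u = 0 := by ext i j; simp [vecMulVec_apply]
    rw [h0, Matrix.mul_zero, Matrix.trace_zero]
  have htr3 : (Bᵀ * (A * B)).trace = q * b := by
    rw [hBt, hB, aux_mul_vecMulVec A u v, aux_vecMulVec_mul_vecMulVec, Matrix.trace_smul,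
      aux_trace_vecMulVec, ← hq, ← hbdef, smul_eq_mul]
  set Y := X + t • B with hYdef
  clear_value Y
  have hYA : (Yᵀ * A * Y).trace = (Xᵀ * A * X).trace + t ^ 2 * (q * b) := by
    have hexp : Yᵀ * (A * Y)
        = Xᵀ * (A * X) + t • (Xᵀ * (A * B)) + t • (Bᵀ * (A * X)) + (t * t) • (Bᵀ * (A * B)) := by
      rw [hYdef]
      simp only [Matrix.transpose_add, Matrix.transpose_smul, Matrix.add_mul,
        Matrix.mul_add, Matrix.smul_mul, Matrix.mul_smul, smul_add, smul_smul,
        Matrix.mul_assoc]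
      abel
    rw [Matrix.mul_assoc Yᵀ A Y, hexp, ← Matrix.mul_assoc Xᵀ A X]
    simp only [Matrix.trace_add, Matrix.trace_smul, htr1, htr2, htr3, smul_zero, add_zero,
      smul_eq_mul]
    ring
  have hYW : Yᵀ * Y - Wd = (Xᵀ * X - Wd) + (t ^ 2 * a) • N := by
    have hexp : Yᵀ * Y = Xᵀ * X + t • (Xᵀ * B) + t • (Bᵀ * X) + (t * t) • (Bᵀ * B) := by
      rw [hYdef]
      simp only [Matrix.transpose_add, Matrix.transpose_smul, Matrix.add_mul,
        Matrix.mul_add, Matrix.smul_mul, Matrix.mul_smul, smul_add, smul_smul]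
      abel
    rw [hexp, hXB, hBX, hBB, smul_smul]
    simp only [smul_zero, add_zero]
    rw [show t * t * a = t ^ 2 * a from by ring]
    abel
  set M0 := Xᵀ * X - Wd with hM0
  clear_value M0
  have hM0T : M0ᵀ = M0 := by
    rw [hM0, Matrix.transpose_sub, Matrix.transpose_mul, Matrix.transpose_transpose, hWd,
      Matrix.diagonal_transpose]
  have hNT : Nᵀ = N := by rw [hN, aux_transpose_vecMulVec]
  have htrM0N : (M0 * N).trace = -r := by
    rw [hN, aux_mul_vecMulVec M0 v v, aux_trace_vecMulVec]
    have hM0v : M0 *ᵥ v = -(Wd *ᵥ v) := by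
      rw [hM0, Matrix.sub_mulVec, ← Matrix.mulVec_mulVec, hXv, Matrix.mulVec_zero, zero_sub]
    rw [hM0v, hrdef]
    rw [neg_dotProduct, dotProduct_comm]
  have htrNN : (N * N).trace = b * b := by
    rw [hN, aux_vecMulVec_mul_vecMulVec, Matrix.trace_smul, aux_trace_vecMulVec, ← hbdef,
      smul_eq_mul]
  have hpen : ((Yᵀ * Y - Wd)ᵀ * (Yᵀ * Y - Wd)).trace
      = (M0ᵀ * M0).trace + (-2) * (t ^ 2 * a) * r + (t ^ 2 * a) ^ 2 * (b * b) := by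
    rw [hYW]
    simp only [Matrix.transpose_add, Matrix.transpose_smul, hM0T, hNT, Matrix.add_mul,
      Matrix.mul_add, smul_mul_assoc, mul_smul_comm, smul_smul, Matrix.trace_add,
      Matrix.trace_smul, smul_eq_mul]
    rw [Matrix.trace_mul_comm N M0, htrM0N, htrNN]
    ring
  have hmin' := hmin Y
  rw [hYA, hpen] at hmin'
  have hmin0 : 0 ≤ (1 / 2) * (t ^ 2 * (q * b))
      + (μ / 4) * ((-2) * (t ^ 2 * a) * r + (t ^ 2 * a) ^ 2 * (b * b)) := by linarith
  -- final contradiction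
  have hz : 0 < t ^ 2 * a * b := mul_pos (mul_pos hT0 ha) hb
  have hzg : (t ^ 2 * a * b) * μ = g := by
    rw [ht2]; field_simp
  have hlam : lamL = μ * wL - μ * (t ^ 2 * a * b) := by
    rw [hgdef] at hzg; linarith
  have e1 : 0 ≤ t ^ 2 * b * (lamL * a - q) :=
    mul_nonneg (mul_nonneg hT0.le hb.le) (by linarith)
  have e2 : 0 ≤ μ * (t ^ 2 * a) * (r - wL * b) :=
    mul_nonneg (mul_nonneg hμ.le (mul_nonneg hT0.le ha.le)) (by linarith)
  have hEF : (1 / 2) * (t ^ 2 * (q * b))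
        + (μ / 4) * ((-2) * (t ^ 2 * a) * r + (t ^ 2 * a) ^ 2 * (b * b))
      = ((1 / 2) * (t ^ 2 * a * b) * lamL - (μ / 2) * (t ^ 2 * a * b) * wL
          + (μ / 4) * (t ^ 2 * a * b) ^ 2)
        - (1 / 2) * (t ^ 2 * b * (lamL * a - q))
        - (1 / 2) * (μ * (t ^ 2 * a) * (r - wL * b)) := by ring
  have hF : (1 / 2) * (t ^ 2 * a * b) * lamL - (μ / 2) * (t ^ 2 * a * b) * wL
        + (μ / 4) * (t ^ 2 * a * b) ^ 2
      = -((μ / 4) * (t ^ 2 * a * b) ^ 2) := by rw [hlam]; ring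
  have hpos : 0 < (μ / 4) * (t ^ 2 * a * b) ^ 2 :=
    mul_pos (by linarith) (pow_pos hz 2)
  linarith

/-- Every global minimizer of the weighted trace-penalty objective has full column rank `p`. -/
theorem stmt_5 {n p : ℕ} (hpn : p < n)
    (A : Matrix (Fin n) (Fin n) ℝ) (hA : A.IsSymm)
    (V : Matrix (Fin n) (Fin n) ℝ) (hV : Vᵀ * V = 1)
    (lam : Fin n → ℝ) (hAV : A = V * Matrix.diagonal lam * Vᵀ)
    (hmono : Monotone lam)
    (hstrict : ∀ i j : Fin n, i < j → (j : ℕ) ≤ p → lam i < lam j)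
    (μ : ℝ) (hμ : 0 < μ)
    (w : Fin p → ℝ) (hwanti : StrictAnti w)
    (hwlam : ∀ i : Fin p, lam (Fin.castLE hpn.le i) / μ < w i)
    (X : Matrix (Fin n) (Fin p) ℝ)
    (hmin : ∀ Y : Matrix (Fin n) (Fin p) ℝ,
      (1 / 2) * (Xᵀ * A * X).trace +
        (μ / 4) * ((Xᵀ * X - Matrix.diagonal w)ᵀ * (Xᵀ * X - Matrix.diagonal w)).trace
      ≤ (1 / 2) * (Yᵀ * A * Y).trace +
        (μ / 4) * ((Yᵀ * Y - Matrix.diagonal w)ᵀ * (Yᵀ * Y - Matrix.diagonal w)).trace) :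
    X.rank = p ∧ ∀ i : Fin p, (fun k => X k i) ≠ 0 := by
  have key : ∀ v : Fin p → ℝ, X *ᵥ v = 0 → v = 0 := by
    intro v hXv
    by_contra hv
    exact aux_key hpn A hA V hV lam hAV hmono μ hμ w hwanti hwlam X hmin v hv hXv
  constructor
  · have hker : LinearMap.ker X.mulVecLin = ⊥ := by
      rw [LinearMap.ker_eq_bot']
      intro v hv
      exact key v (by simpa [Matrix.mulVecLin_apply] using hv)
    have h := LinearMap.finrank_range_add_finrank_ker X.mulVecLin
    rw [hker, finrank_bot, add_zero] at h
    simpa [Matrix.rank] using h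
  · intro i hcol
    have h1 : X *ᵥ Pi.single i 1 = 0 := by
      ext k
      have := congrFun hcol k
      simp only [Pi.zero_apply] at this
      simp [Matrix.mulVec_single, this]
    have h2 := key _ h1
    have h3 := congrFun h2 i
    simp at h3
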